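/- Let f ∈ ℚ[x] with f(0) ≠ 0 have no multiple roots, and suppose some root of f is not a root of rational. Let (G, R) be one of the pairs (G_f, R_f), (G_f^B, R_f^ℚ), (G_f^ℚ, R_f^ℚ). If G is transitive on the roots of f and the pair (G, H) is ℚ-trivial, where H is the stabilizer in G of a root of f, then the lattice R is trivial. -/

import Mathlib

noncomputable section

open Polynomial

/-- `z` is a root of rational: some positive power of `z` is rational. -/
def IsRootOfRational (z : ℂ) : Prop := ∃ k : ℕ, 0 < k ∧ ∃ q : ℚ, z ^ k = (q : ℂ)

/-- `z` is a rational number (viewed in `ℂ`). -/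
def IsRat (z : ℂ) : Prop := ∃ q : ℚ, z = (q : ℂ)

/-- The Galois-like group `G_f`: permutations of the (indexed) roots preserving all
multiplicative relations. -/
def GaloisLike {ι : Type*} [Fintype ι] (r : ι → ℂ) : Set (Equiv.Perm ι) :=
  {σ | ∀ v : ι → ℤ, (∏ i, r i ^ v i) = 1 → (∏ i, r (σ i) ^ v i) = 1}

/-- The Galois-like group `G_f^B`. -/
def GaloisLikeB {ι : Type*} [Fintype ι] (r : ι → ℂ) : Set (Equiv.Perm ι) :=
  {σ | ∀ v : ι → ℤ, IsRat (∏ i, r i ^ v i) → (∏ i, r (σ i) ^ v i) = ∏ i, r i ^ v i}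

/-- The Galois-like group `G_f^ℚ`. -/
def GaloisLikeQ {ι : Type*} [Fintype ι] (r : ι → ℂ) : Set (Equiv.Perm ι) :=
  {σ | ∀ v : ι → ℤ, IsRat (∏ i, r i ^ v i) → IsRat (∏ i, r (σ i) ^ v i)}

/-- The exponent lattice of the vector `w` is trivial. -/
def VecLatticeTrivial {ι : Type*} [Fintype ι] (w : ι → ℂ) : Prop :=
  ∀ u : ι → ℤ, (∏ i, w i ^ u i) = 1 → ∀ i j : ι, u i = u j

/-- The lattice `R_w^ℚ` of the vector `w` is trivial. -/
def VecLatticeQTrivial {ι : Type*} [Fintype ι] (w : ι → ℂ) : Prop :=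
  ∀ u : ι → ℤ, IsRat (∏ i, w i ^ u i) → ∀ i j : ι, u i = u j

/-- A subset `M ⊆ ℚ[G/H]` is ℚ-admissible: there is `μ ∈ ℚ[G]` with stabilizer
(under left multiplication) exactly `H` such that `mμ = 0` for all `m ∈ M`
(here `Σ_{g∈G} m(ḡ) • gμ = |H| ⋅ (mμ)`, so we express `mμ = 0` this way). -/
def IsQAdmissible {G : Type*} [Group G] (H : Subgroup G) (M : Set ((G ⧸ H) →₀ ℚ)) : Prop :=
  ∃ μ : MonoidAlgebra ℚ G,
    (∀ g : G, MonoidAlgebra.single g (1 : ℚ) * μ = μ ↔ g ∈ H) ∧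
    ∀ m ∈ M, (∑ᶠ g : G, m (QuotientGroup.mk g) • (MonoidAlgebra.single g (1 : ℚ) * μ)) = 0

/-- A ℚ-subspace of `ℚ[G/H]` is a `ℚ[G]`-submodule iff it is stable under the
permutation action of `G` on `G/H`. -/
def IsGStable {G : Type*} [Group G] (H : Subgroup G) (M : Submodule ℚ ((G ⧸ H) →₀ ℚ)) : Prop :=
  ∀ g : G, ∀ m ∈ M, Finsupp.mapDomain (fun x : G ⧸ H => g • x) m ∈ M

/-- The pair `(G,H)` is ℚ-trivial: the only ℚ-admissible `ℚ[G]`-submodules of `ℚ[G/H]`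
are `0` and `V₁` (the line of constant coefficient vectors). -/
def QTrivialPair {G : Type*} [Group G] (H : Subgroup G) : Prop :=
  ∀ M : Submodule ℚ ((G ⧸ H) →₀ ℚ), IsGStable H M →
    IsQAdmissible H (M : Set ((G ⧸ H) →₀ ℚ)) →
    M = ⊥ ∨ (M : Set ((G ⧸ H) →₀ ℚ)) = {m | ∃ a : ℚ, ∀ x, m x = a}

/-- The action of `G` on `G/H` is transitive. -/
def PairTransitive {G : Type*} [Group G] (H : Subgroup G) : Prop :=
  ∀ x y : G ⧸ H, ∃ g : G, g • x = y

/-- The action of `G` on `G/H` is doubly transitive. -/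
def PairDoublyTransitive {G : Type*} [Group G] (H : Subgroup G) : Prop :=
  ∀ x₁ x₂ y₁ y₂ : G ⧸ H, x₁ ≠ x₂ → y₁ ≠ y₂ → ∃ g : G, g • x₁ = y₁ ∧ g • x₂ = y₂

/-- The action of `G` on `G/H` is doubly homogeneous. -/
def PairDoublyHomogeneous {G : Type*} [Group G] (H : Subgroup G) : Prop :=
  ∀ x₁ x₂ y₁ y₂ : G ⧸ H, x₁ ≠ x₂ → y₁ ≠ y₂ →
    ∃ g : G, ({g • x₁, g • x₂} : Set (G ⧸ H)) = {y₁, y₂}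

/-- A set of permutations of `ι` acts transitively. -/
def SetTransitive {ι : Type*} (S : Set (Equiv.Perm ι)) : Prop :=
  ∀ i j : ι, ∃ σ ∈ S, σ i = j

/-- A set of permutations of `ι` acts doubly transitively. -/
def SetDoublyTransitive {ι : Type*} (S : Set (Equiv.Perm ι)) : Prop :=
  ∀ i j k l : ι, i ≠ j → k ≠ l → ∃ σ ∈ S, σ i = k ∧ σ j = l

/-- A set of permutations of `ι` acts doubly homogeneously. -/
def SetDoublyHomogeneous {ι : Type*} (S : Set (Equiv.Perm ι)) : Prop :=
  ∀ i j k l : ι, i ≠ j → k ≠ l → ∃ σ ∈ S, ({σ i, σ j} : Set ι) = {k, l}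


/-- The stabilizer, inside a subgroup `G` of the symmetric group on the roots, of the
root with index `i₀`. -/
def stabSubgroup {ι : Type*} (G : Subgroup (Equiv.Perm ι)) (i₀ : ι) : Subgroup ↥G where
  carrier := {σ : ↥G | (σ : Equiv.Perm ι) i₀ = i₀}
  one_mem' := rfl
  mul_mem' := by
    intro a b ha hb
    simp only [Set.mem_setOf_eq] at *
    simp [Equiv.Perm.mul_apply, ha, hb]
  inv_mem' := by
    intro a ha
    simp only [Set.mem_setOf_eq] at *
    have := congrArg (⇑(a : Equiv.Perm ι)⁻¹) ha
    simpa using this.symm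


open Classical

lemma IsRat.mul {a b : ℂ} (ha : IsRat a) (hb : IsRat b) : IsRat (a*b) := by
  obtain ⟨p, rfl⟩ := ha; obtain ⟨q, rfl⟩ := hb; exact ⟨p*q, by push_cast; ring⟩
lemma IsRat.inv {a : ℂ} (ha : IsRat a) : IsRat a⁻¹ := by
  obtain ⟨p, rfl⟩ := ha; exact ⟨p⁻¹, by push_cast; ring⟩
lemma IsRat.pow {a : ℂ} (ha : IsRat a) (k : ℕ) : IsRat (a ^ k) := by
  obtain ⟨p, rfl⟩ := ha; exact ⟨p^k, by push_cast; ring⟩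
lemma IsRat.one : IsRat 1 := ⟨1, by norm_num⟩

lemma IsRat_prod {ι : Type*} (s : Finset ι) (F : ι → ℂ) (h : ∀ j ∈ s, IsRat (F j)) :
    IsRat (∏ j ∈ s, F j) :=
  Finset.prod_induction F IsRat (fun _ _ => IsRat.mul) IsRat.one h

lemma roots_prod_isRat {f : Polynomial ℚ} (hf0 : f.eval 0 ≠ 0) {n : ℕ} (hn : n = f.natDegree)
    (r : Fin n → ℂ) (hinj : Function.Injective r)
    (hroot : ∀ i, Polynomial.aeval (r i) f = 0) : IsRat (∏ i, r i) := by
  have hf : f ≠ 0 := fun h => hf0 (by simp [h])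
  set gC : Polynomial ℂ := f.map (algebraMap ℚ ℂ) with hgC
  have hgC0 : gC ≠ 0 := by
    rw [hgC]
    exact (Polynomial.map_ne_zero_iff (algebraMap ℚ ℂ).injective).mpr hf
  have hdeg : gC.natDegree = n := by
    rw [hgC, Polynomial.natDegree_map, hn]
  have hmem : ∀ i, r i ∈ gC.roots := by
    intro i
    rw [Polynomial.mem_roots hgC0]
    show gC.eval (r i) = 0
    rw [hgC, Polynomial.eval_map, ← Polynomial.aeval_def]
    exact hroot i
  set ms : Multiset ℂ := Finset.univ.val.map r with hms
  have hnodup : ms.Nodup := Multiset.Nodup.map hinj Finset.univ.nodup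
  have hle : ms ≤ gC.roots := by
    rw [Multiset.le_iff_count]
    intro a
    by_cases ha : a ∈ ms
    · rw [Multiset.count_eq_one_of_mem hnodup ha]
      obtain ⟨i, _, rfl⟩ := Multiset.mem_map.mp ha
      exact Multiset.one_le_count_iff_mem.mpr (hmem i)
    · rw [Multiset.count_eq_zero_of_notMem ha]
      exact Nat.zero_le _
  have hcardms : ms.card = n := by rw [hms, Multiset.card_map]; simp
  have hcard : gC.roots.card ≤ ms.card := by
    rw [hcardms, ← hdeg]
    exact gC.card_roots'
  have heq : ms = gC.roots := Multiset.eq_of_le_of_card_le hle hcard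
  have hsplits : Polynomial.Splits gC := IsAlgClosed.splits gC
  have hprodeq := hsplits.eq_prod_roots
  have heval := congrArg (Polynomial.eval 0) hprodeq
  rw [Polynomial.eval_mul, Polynomial.eval_C, Polynomial.eval_multiset_prod, ← heq] at heval
  have hmapms : (ms.map fun a => Polynomial.eval 0 (Polynomial.X - Polynomial.C a)).prod
      = (-1)^n * ∏ i, r i := by
    rw [hms, Multiset.map_map]
    have : ∀ a : ℂ, (Polynomial.eval 0 (Polynomial.X - Polynomial.C a)) = -a := by
      intro a; simp
    calc (Finset.univ.val.map fun i => Polynomial.eval 0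
            (Polynomial.X - Polynomial.C (r i))).prod
        = ∏ i, -(r i) := by
          refine congrArg Multiset.prod ?_
          exact Multiset.map_congr rfl fun i _ => this (r i)
      _ = ∏ i, ((-1) * r i) := by refine Finset.prod_congr rfl fun i _ => by ring
      _ = (-1)^n * ∏ i, r i := by
          rw [Finset.prod_mul_distrib, Finset.prod_const, Finset.card_univ, Fintype.card_fin]
  rw [Multiset.map_map] at heval
  simp only [Function.comp] at heval
  rw [hmapms] at heval
  have heval2 : gC.eval 0 = gC.leadingCoeff * ((-1)^n * ∏ i, r i) := heval
  have hlc : gC.leadingCoeff = ((f.leadingCoeff : ℚ) : ℂ) := by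
    rw [hgC, Polynomial.leadingCoeff_map]
    exact eq_ratCast _ _
  have hev0 : gC.eval 0 = ((f.eval 0 : ℚ) : ℂ) := by
    rw [hgC, Polynomial.eval_map, Polynomial.eval₂_at_zero,
      Polynomial.coeff_zero_eq_eval_zero]
    exact eq_ratCast _ _
  have hlc0 : f.leadingCoeff ≠ 0 := Polynomial.leadingCoeff_ne_zero.mpr hf
  refine ⟨(-1)^n * f.eval 0 / f.leadingCoeff, ?_⟩
  rw [hev0, hlc] at heval2
  have hlc0' : ((f.leadingCoeff : ℚ) : ℂ) ≠ 0 := by exact_mod_cast hlc0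
  have hsq : ((-1 : ℂ))^n * (-1)^n = 1 := by rw [← mul_pow]; norm_num
  push_cast
  field_simp
  generalize hε : ((-1 : ℂ))^n = ε at heval2 hsq ⊢
  linear_combination (-ε) * heval2 - ((f.leadingCoeff : ℂ) * ∏ i, r i) * hsq

lemma prod_zpow_add {n : ℕ} {r : Fin n → ℂ} (hr : ∀ i, r i ≠ 0) (a b : Fin n → ℤ) :
    (∏ i, r i ^ (a i + b i)) = (∏ i, r i ^ a i) * (∏ i, r i ^ b i) := by
  rw [← Finset.prod_mul_distrib]
  exact Finset.prod_congr rfl fun i _ => zpow_add₀ (hr i) _ _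

lemma prod_zpow_neg {n : ℕ} {r : Fin n → ℂ} (a : Fin n → ℤ) :
    (∏ i, r i ^ (-a i)) = (∏ i, r i ^ a i)⁻¹ := by
  rw [← Finset.prod_inv_distrib]
  exact Finset.prod_congr rfl fun i _ => zpow_neg _ _

lemma prod_zpow_single {n : ℕ} (r : Fin n → ℂ) (i : Fin n) (k : ℤ) :
    (∏ t, r t ^ (Pi.single i k : Fin n → ℤ) t) = r i ^ k := by
  rw [Finset.prod_eq_single i]
  · simp
  · intro t _ ht; simp [Pi.single_apply, ht]
  · simp

lemma final_contradiction {n : ℕ} (r : Fin n → ℂ) (hr0 : ∀ i, r i ≠ 0)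
    (hprod : IsRat (∏ i, r i)) (istar : Fin n)
    (hbad : ∀ j : Fin n, ∃ k : ℤ, 0 < k ∧
      IsRat (∏ t, r t ^ ((k • ((Pi.single istar 1 : Fin n → ℤ) - Pi.single j 1) : Fin n → ℤ)) t)) :
    IsRootOfRational (r istar) := by
  have step1 : ∀ j : Fin n, ∃ m : ℕ, 0 < m ∧ IsRat (r istar ^ m * (r j ^ m)⁻¹) := by
    intro j
    obtain ⟨k, hk, hrat⟩ := hbad j
    refine ⟨k.toNat, by omega, ?_⟩
    have hval : (∏ t, r t ^ ((k • ((Pi.single istar 1 : Fin n → ℤ) - Pi.single j 1) : Fin n → ℤ)) t)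
        = r istar ^ k * (r j ^ k)⁻¹ := by
      have hfun : ((k • ((Pi.single istar 1 : Fin n → ℤ) - Pi.single j 1) : Fin n → ℤ))
          = fun t => (Pi.single istar k : Fin n → ℤ) t + (-((Pi.single j k : Fin n → ℤ) t)) := by
        funext t
        simp only [Pi.smul_apply, Pi.sub_apply, smul_eq_mul, Pi.single_apply]
        split_ifs <;> ring
      rw [hfun, prod_zpow_add hr0]
      congr 1
      · exact prod_zpow_single r istar k
      · rw [prod_zpow_neg, prod_zpow_single]
    rw [hval] at hrat
    have hkk : (k.toNat : ℤ) = k := Int.toNat_of_nonneg (le_of_lt hk)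
    rw [← hkk, zpow_natCast, zpow_natCast] at hrat
    exact hrat
  choose κ hκpos hκrat using step1
  set K : ℕ := ∏ j, κ j with hK
  have hKpos : 0 < K := Finset.prod_pos fun j _ => hκpos j
  have hdvd : ∀ j : Fin n, κ j ∣ K := fun j => Finset.dvd_prod_of_mem κ (Finset.mem_univ j)
  have hstepK : ∀ j : Fin n, IsRat (r istar ^ K * (r j ^ K)⁻¹) := by
    intro j
    have := IsRat.pow (hκrat j) (K / κ j)
    have heq : (r istar ^ κ j * (r j ^ κ j)⁻¹) ^ (K / κ j)
        = r istar ^ K * (r j ^ K)⁻¹ := by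
      rw [mul_pow, ← pow_mul, ← inv_pow, ← pow_mul, Nat.mul_div_cancel' (hdvd j), inv_pow]
    rwa [heq] at this
  have hbig : IsRat (∏ j, (r istar ^ K * (r j ^ K)⁻¹)) :=
    IsRat_prod Finset.univ _ (fun j _ => hstepK j)
  have hbigeq : (∏ j, (r istar ^ K * (r j ^ K)⁻¹))
      = r istar ^ (n * K) * ((∏ j, r j) ^ K)⁻¹ := by
    rw [Finset.prod_mul_distrib, Finset.prod_const, Finset.card_univ, Fintype.card_fin,
      ← pow_mul, mul_comm K n]
    congr 1
    rw [← Finset.prod_pow]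
    exact Finset.prod_inv_distrib (s := Finset.univ) (f := fun j => r j ^ K)
  have hne : (∏ j, r j) ≠ 0 := Finset.prod_ne_zero_iff.mpr fun j _ => hr0 j
  have hfinal : IsRat (r istar ^ (n * K)) := by
    have h1 : IsRat ((r istar ^ (n * K) * ((∏ j, r j) ^ K)⁻¹) * ((∏ j, r j) ^ K)) := by
      refine IsRat.mul ?_ (IsRat.pow hprod K)
      rw [← hbigeq]; exact hbig
    have h2 : (r istar ^ (n * K) * ((∏ j, r j) ^ K)⁻¹) * ((∏ j, r j) ^ K)
        = r istar ^ (n * K) := by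
      field_simp
    rwa [h2] at h1
  obtain ⟨q, hq⟩ := hfinal
  have hn : 0 < n := Fin.pos istar
  exact ⟨n * K, by positivity, q, hq⟩


section
variable {n : ℕ} (G : Subgroup (Equiv.Perm (Fin n))) (i₀ : Fin n)

lemma mem_stab (g : ↥G) : g ∈ stabSubgroup G i₀ ↔ (g : Equiv.Perm (Fin n)) i₀ = i₀ := Iff.rfl

abbrev QT := ↥G ⧸ stabSubgroup G i₀

instance : Fintype ↥G := Fintype.ofFinite _
instance : Fintype (QT G i₀) := Fintype.ofFinite _

def emap : QT G i₀ → Fin n :=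
  Quotient.lift (fun g : ↥G => (g : Equiv.Perm (Fin n)) i₀) (by
    intro a b hab
    have h : a⁻¹ * b ∈ stabSubgroup G i₀ := QuotientGroup.leftRel_apply.mp hab
    have : ((a⁻¹ * b : ↥G) : Equiv.Perm (Fin n)) i₀ = i₀ := h
    simp only [Subgroup.coe_mul, Equiv.Perm.mul_apply] at this
    have := congrArg (⇑(a : Equiv.Perm (Fin n))) this
    simpa using this.symm)

lemma emap_mk (g : ↥G) : emap G i₀ (QuotientGroup.mk g) = (g : Equiv.Perm (Fin n)) i₀ := rfl

lemma emap_inj : Function.Injective (emap G i₀) := by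
  intro a b
  induction a using Quotient.inductionOn
  induction b using Quotient.inductionOn
  rename_i a b
  intro h
  rw [emap_mk, emap_mk] at h
  refine (QuotientGroup.eq).mpr ?_
  show ((a⁻¹ * b : ↥G) : Equiv.Perm (Fin n)) i₀ = i₀
  simp only [Subgroup.coe_mul, Equiv.Perm.mul_apply, ← h]
  simp

lemma emap_surj (htrans : SetTransitive (G : Set (Equiv.Perm (Fin n)))) :
    Function.Surjective (emap G i₀) := by
  intro j
  obtain ⟨σ, hσ, h⟩ := htrans i₀ j
  exact ⟨QuotientGroup.mk (⟨σ, hσ⟩ : ↥G), h⟩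

lemma emap_smul (g : ↥G) (x : QT G i₀) :
    emap G i₀ (g • x) = (g : Equiv.Perm (Fin n)) (emap G i₀ x) := by
  induction x using Quotient.inductionOn
  rename_i h
  show emap G i₀ (QuotientGroup.mk (g * h)) = _
  rw [emap_mk, emap_mk]
  simp

/-- The submodule of `ℚ[G/H]` of vectors orthogonal to every `λ ∈ Λ`. -/
def MΛ (Λ : Set (Fin n → ℚ)) : Submodule ℚ ((QT G i₀) →₀ ℚ) where
  carrier := {m | ∀ lam ∈ Λ, ∑ x : QT G i₀, (m x) * lam (emap G i₀ x) = 0}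
  add_mem' := by
    intro a b ha hb lam hl
    simp only [Finsupp.coe_add, Pi.add_apply, add_mul, Finset.sum_add_distrib,
      ha lam hl, hb lam hl, add_zero]
  zero_mem' := by intro lam hl; simp
  smul_mem' := by
    intro c m hm lam hl
    simp only [Finsupp.coe_smul, Pi.smul_apply, smul_eq_mul, mul_assoc, ← Finset.mul_sum,
      hm lam hl, mul_zero]

lemma mem_MΛ (Λ : Set (Fin n → ℚ)) (m : (QT G i₀) →₀ ℚ) :
    m ∈ MΛ G i₀ Λ ↔ ∀ lam ∈ Λ, ∑ x : QT G i₀, (m x) * lam (emap G i₀ x) = 0 := Iff.rfl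

lemma MΛ_stable (Λ : Set (Fin n → ℚ))
    (hclose : ∀ g : ↥G, ∀ lam ∈ Λ, (fun i => lam ((g : Equiv.Perm (Fin n)) i)) ∈ Λ) :
    IsGStable (stabSubgroup G i₀) (MΛ G i₀ Λ) := by
  intro g m hm
  rw [mem_MΛ] at hm ⊢
  intro lam hl
  have hbij : Function.Bijective (fun x : QT G i₀ => g • x) :=
    (MulAction.toPerm g).bijective
  rw [← Function.Bijective.sum_comp hbij
    (fun x => (Finsupp.mapDomain (fun x : QT G i₀ => g • x) m) x * lam (emap G i₀ x))]
  have key : ∀ y : QT G i₀,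
      (Finsupp.mapDomain (fun x : QT G i₀ => g • x) m) (g • y) = m y := fun y =>
    Finsupp.mapDomain_apply (MulAction.injective g) m y
  calc ∑ y : QT G i₀, (Finsupp.mapDomain (fun x : QT G i₀ => g • x) m) (g • y)
        * lam (emap G i₀ (g • y))
      = ∑ y : QT G i₀, m y * (fun i => lam ((g : Equiv.Perm (Fin n)) i)) (emap G i₀ y) := by
        refine Finset.sum_congr rfl fun y _ => ?_
        rw [key y, emap_smul]
    _ = 0 := hm _ (hclose g lam hl)

end

section
variable {n : ℕ} (G : Subgroup (Equiv.Perm (Fin n))) (i₀ : Fin n)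

lemma sum_single_apply' {α : Type*} [Fintype α] [DecidableEq α] (a : α → ℚ) (t : α) :
    (∑ s : α, Finsupp.single s (a s)) t = a t := by
  rw [Finsupp.finset_sum_apply, Finset.sum_eq_single t]
  · simp
  · intro s _ hs; simp [Finsupp.single_apply, hs]
  · simp

lemma fiber_card {Gr : Type*} [Group Gr] [Fintype Gr] (H : Subgroup Gr) (x : Gr ⧸ H) :
    (Finset.univ.filter (fun g : Gr => (QuotientGroup.mk g : Gr ⧸ H) = x)).card
      = Fintype.card H := by
  rw [← Fintype.card_subtype]
  refine Fintype.card_congr ?_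
  refine { toFun := fun g => ⟨(Quotient.out x)⁻¹ * g.1, ?_⟩,
           invFun := fun h => ⟨(Quotient.out x) * h.1, ?_⟩,
           left_inv := ?_, right_inv := ?_ }
  · have : (QuotientGroup.mk (Quotient.out x) : Gr ⧸ H) = QuotientGroup.mk g.1 := by
      rw [g.2]; exact QuotientGroup.out_eq' x
    exact (QuotientGroup.eq).mp this
  · rw [← QuotientGroup.out_eq' x]
    exact ((QuotientGroup.eq).mpr (by simpa using h.2)).symm
  · intro g; simp
  · intro h; simp

lemma MΛ_adm (Λ : Set (Fin n → ℚ))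
    (hclose : ∀ g : ↥G, ∀ lam ∈ Λ, (fun i => lam ((g : Equiv.Perm (Fin n)) i)) ∈ Λ)
    (lam₀ : Fin n → ℚ) (h₀ : lam₀ ∈ Λ) (hsep : ∀ x, lam₀ x = lam₀ i₀ → x = i₀) :
    IsQAdmissible (stabSubgroup G i₀) ((MΛ G i₀ Λ : Submodule ℚ _) : Set ((QT G i₀) →₀ ℚ)) := by
  set v : ↥G → ℚ := fun s => lam₀ (((s⁻¹ : ↥G) : Equiv.Perm (Fin n)) i₀) with hv
  refine ⟨∑ s : ↥G, MonoidAlgebra.single s (v s), ?_, ?_⟩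
  case' _ =>
    skip
  all_goals
    have hmul : ∀ g : ↥G, MonoidAlgebra.single g (1:ℚ) * (∑ s : ↥G, MonoidAlgebra.single s (v s))
        = ∑ t : ↥G, MonoidAlgebra.single t (v (g⁻¹ * t)) := by
      intro g
      rw [Finset.mul_sum]
      rw [Finset.sum_congr rfl fun s _ => by
        rw [MonoidAlgebra.single_mul_single, one_mul]]
      exact Fintype.sum_equiv (Equiv.mulLeft g) _ _ (fun s => by simp)
  · -- stabilizer condition
    intro g
    rw [hmul g]
    constructor
    · intro h
      have h1 := congrArg (fun m : MonoidAlgebra ℚ ↥G => m.coeff 1) h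
      simp only [MonoidAlgebra.coeff_sum, MonoidAlgebra.coeff_single] at h1
      rw [sum_single_apply', sum_single_apply'] at h1
      have : lam₀ ((g : Equiv.Perm (Fin n)) i₀) = lam₀ i₀ := by
        simpa [hv, Equiv.Perm.inv_def, Equiv.Perm.one_def] using h1
      exact (mem_stab G i₀ g).mpr (hsep _ this)
    · intro hg
      refine Finset.sum_congr rfl fun t _ => ?_
      congr 1
      have hgi : (g : Equiv.Perm (Fin n)) i₀ = i₀ := hg
      simp only [hv, mul_inv_rev, inv_inv, Subgroup.coe_mul, Equiv.Perm.mul_apply, hgi]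
  · -- kill condition
    intro m hm
    rw [finsum_eq_sum_of_fintype]
    have step : ∀ g : ↥G, m (QuotientGroup.mk g) • (MonoidAlgebra.single g (1:ℚ) *
        (∑ s : ↥G, MonoidAlgebra.single s (v s)))
        = ∑ t : ↥G, MonoidAlgebra.single t (m (QuotientGroup.mk g) * v (g⁻¹ * t)) := by
      intro g
      rw [hmul g, Finset.smul_sum]
      exact Finset.sum_congr rfl fun t _ => by rw [MonoidAlgebra.smul_single, smul_eq_mul]
    rw [Finset.sum_congr rfl fun g _ => step g, Finset.sum_comm]
    have inner : ∀ t : ↥G, ∑ g : ↥G, m (QuotientGroup.mk g) * v (g⁻¹ * t) = 0 := by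
      intro t
      set lam' : Fin n → ℚ := fun i => lam₀ (((t⁻¹ : ↥G) : Equiv.Perm (Fin n)) i) with hlam'
      have hrw : ∀ g : ↥G, m (QuotientGroup.mk g) * v (g⁻¹ * t)
          = m (QuotientGroup.mk g) * lam' (emap G i₀ (QuotientGroup.mk g)) := by
        intro g
        have : v (g⁻¹ * t) = lam' (emap G i₀ (QuotientGroup.mk g)) := by
          simp [hv, hlam', mul_inv_rev, emap_mk, Equiv.Perm.mul_def, Equiv.Perm.inv_def]
        rw [this]
      rw [Finset.sum_congr rfl fun g _ => hrw g]
      rw [← Finset.sum_fiberwise' Finset.univ (fun g : ↥G => (QuotientGroup.mk g : QT G i₀))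
        (fun x => m x * lam' (emap G i₀ x))]
      have : ∀ x : QT G i₀, ∑ _g ∈ Finset.univ.filter
          (fun g : ↥G => (QuotientGroup.mk g : QT G i₀) = x), m x * lam' (emap G i₀ x)
          = (Fintype.card (stabSubgroup G i₀) : ℚ) * (m x * lam' (emap G i₀ x)) := by
        intro x
        rw [Finset.sum_const, fiber_card, nsmul_eq_mul]
      rw [Finset.sum_congr rfl fun x _ => this x, ← Finset.mul_sum]
      rw [hm lam' (hclose t⁻¹ lam₀ h₀), mul_zero]
    rw [Finset.sum_congr rfl fun t _ => (show ∑ g : ↥G, MonoidAlgebra.single t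
      (m (QuotientGroup.mk g) * v (g⁻¹ * t)) = 0 by
        rw [← MonoidAlgebra.coeff_inj]
        simp only [MonoidAlgebra.coeff_sum, MonoidAlgebra.coeff_single, MonoidAlgebra.coeff_zero]
        rw [← Finsupp.single_finset_sum, inner t, Finsupp.single_zero])]
    simp

end

section
variable {n : ℕ} (G : Subgroup (Equiv.Perm (Fin n))) (i₀ : Fin n)

lemma keyLemma (htrans : SetTransitive (G : Set (Equiv.Perm (Fin n))))
    (hq : QTrivialPair (stabSubgroup G i₀)) (Λ : Set (Fin n → ℚ))
    (hclose : ∀ g : ↥G, ∀ lam ∈ Λ, (fun i => lam ((g : Equiv.Perm (Fin n)) i)) ∈ Λ)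
    (lam₀ : Fin n → ℚ) (h₀ : lam₀ ∈ Λ) (hsep : ∀ x, lam₀ x = lam₀ i₀ → x = i₀) :
    (∀ m : Fin n → ℚ, (∀ lam ∈ Λ, ∑ i, m i * lam i = 0) → m = 0)
    ∨ (∀ m : Fin n → ℚ, (∀ lam ∈ Λ, ∑ i, m i * lam i = 0) → ∀ i j, m i = m j) := by
  have hb : Function.Bijective (emap G i₀) := ⟨emap_inj G i₀, emap_surj G i₀ htrans⟩
  have transfer : ∀ m : Fin n → ℚ, (∀ lam ∈ Λ, ∑ i, m i * lam i = 0) →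
      (Finsupp.equivFunOnFinite.symm (fun x => m (emap G i₀ x))) ∈ MΛ G i₀ Λ := by
    intro m horth lam hl
    have happ : ∀ x : QT G i₀,
        (Finsupp.equivFunOnFinite.symm (fun x => m (emap G i₀ x))) x = m (emap G i₀ x) := by
      intro x; simp [Finsupp.equivFunOnFinite]
    calc ∑ x : QT G i₀, (Finsupp.equivFunOnFinite.symm (fun x => m (emap G i₀ x))) x
          * lam (emap G i₀ x)
        = ∑ x : QT G i₀, (fun i => m i * lam i) (emap G i₀ x) := by
          refine Finset.sum_congr rfl fun x _ => ?_; rw [happ x]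
      _ = ∑ i, m i * lam i := Function.Bijective.sum_comp hb (fun i => m i * lam i)
      _ = 0 := horth lam hl
  rcases hq (MΛ G i₀ Λ) (MΛ_stable G i₀ Λ hclose) (MΛ_adm G i₀ Λ hclose lam₀ h₀ hsep)
    with h | h
  · left
    intro m horth
    have := transfer m horth
    rw [h, Submodule.mem_bot] at this
    funext i
    obtain ⟨x, hx⟩ := hb.2 i
    have := congrArg (fun f : QT G i₀ →₀ ℚ => f x) this
    simpa [Finsupp.equivFunOnFinite, hx] using this
  · right
    intro m horth i j
    have hmem : (Finsupp.equivFunOnFinite.symm (fun x => m (emap G i₀ x)))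
        ∈ ((MΛ G i₀ Λ : Submodule ℚ _) : Set ((QT G i₀) →₀ ℚ)) := transfer m horth
    rw [h] at hmem
    obtain ⟨a, ha⟩ := hmem
    obtain ⟨x, hx⟩ := hb.2 i
    obtain ⟨y, hy⟩ := hb.2 j
    have h1 := ha x
    have h2 := ha y
    simp only [Finsupp.coe_equivFunOnFinite_symm] at h1 h2
    rw [← hx, ← hy, h1, h2]
end

section
variable {n : ℕ}

def intCast (v : Fin n → ℤ) : Fin n → ℚ := fun t => (v t : ℚ)

def Lperp (L : Set (Fin n → ℤ)) : Set (Fin n → ℚ) :=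
  {lam | ∀ v ∈ L, ∑ i, (v i : ℚ) * lam i = 0}

lemma phi_eq_sum (φ : Module.Dual ℚ (Fin n → ℚ)) (v : Fin n → ℚ) :
    φ v = ∑ t, v t * φ (Pi.single t 1) := by
  have hv : ∑ t, v t • (Pi.single t 1 : Fin n → ℚ) = v := by
    funext s
    simp [Finset.sum_apply, Pi.single_apply]
  conv_lhs => rw [← hv]
  rw [map_sum]
  exact Finset.sum_congr rfl fun t _ => by rw [map_smul, smul_eq_mul]

lemma dual_clearing (L : AddSubgroup (Fin n → ℤ)) (i j : Fin n)
    (h : ∀ lam ∈ Lperp (L : Set (Fin n → ℤ)), lam i = lam j) :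
    ∃ k : ℤ, 0 < k ∧ (k • ((Pi.single i 1 : Fin n → ℤ) - Pi.single j 1)) ∈ L := by
  set W : Submodule ℚ (Fin n → ℚ) := Submodule.span ℚ (intCast '' (L : Set (Fin n → ℤ))) with hW
  have hwmem : ((Pi.single i 1 : Fin n → ℚ) - Pi.single j 1) ∈ W := by
    by_contra hw
    rw [← Subspace.forall_mem_dualAnnihilator_apply_eq_zero_iff W] at hw
    push_neg at hw
    obtain ⟨φ, hann, hphi⟩ := hw
    set lam : Fin n → ℚ := fun t => φ (Pi.single t 1) with hlam
    have hlamperp : lam ∈ Lperp (L : Set (Fin n → ℤ)) := by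
      intro v hv
      have : φ (intCast v) = 0 := by
        rw [Submodule.mem_dualAnnihilator] at hann
        exact hann _ (Submodule.subset_span ⟨v, hv, rfl⟩)
      rw [phi_eq_sum] at this
      simpa [intCast, hlam] using this
    have := h lam hlamperp
    apply hphi
    rw [map_sub]
    simpa [hlam] using sub_eq_zero_of_eq this
  -- clearing denominators
  have main : ∀ (w : Fin n → ℚ), w ∈ W → ∃ k : ℤ, 0 < k ∧ ∃ u ∈ L, intCast u = (k : ℚ) • w := by
    intro w hw
    induction hw using Submodule.span_induction with
    | mem x hx =>
      obtain ⟨u, hu, rfl⟩ := hx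
      exact ⟨1, one_pos, u, hu, by simp⟩
    | zero => exact ⟨1, one_pos, 0, L.zero_mem, by simp [intCast]; rfl⟩
    | add x y hx hy ihx ihy =>
      obtain ⟨k1, hk1, u1, hu1, he1⟩ := ihx
      obtain ⟨k2, hk2, u2, hu2, he2⟩ := ihy
      refine ⟨k1 * k2, mul_pos hk1 hk2, k2 • u1 + k1 • u2,
        L.add_mem (L.zsmul_mem hu1 k2) (L.zsmul_mem hu2 k1), ?_⟩
      funext t
      simp only [intCast, Pi.add_apply, Pi.smul_apply, smul_eq_mul, Pi.intCast_apply] at *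
      have e1 := congrFun he1 t
      have e2 := congrFun he2 t
      simp only [intCast, Pi.smul_apply, smul_eq_mul] at e1 e2
      push_cast
      push_cast at e1 e2
      rw [e1, e2]; ring
    | smul a x hx ihx =>
      obtain ⟨k, hk, u, hu, he⟩ := ihx
      refine ⟨k * a.den, by positivity, a.num • u, L.zsmul_mem hu a.num, ?_⟩
      funext t
      have e := congrFun he t
      simp only [intCast, Pi.smul_apply, smul_eq_mul] at e ⊢
      have hnum : ((a.num : ℚ)) = a * a.den := by
        rw [mul_comm]; exact_mod_cast (Rat.den_mul_eq_num a).symm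
      push_cast
      push_cast at e
      rw [e, hnum]
      ring
  obtain ⟨k, hk, u, hu, he⟩ := main _ hwmem
  refine ⟨k, hk, ?_⟩
  have : u = k • ((Pi.single i 1 : Fin n → ℤ) - Pi.single j 1) := by
    funext t
    have e := congrFun he t
    simp only [intCast, Pi.smul_apply, Pi.sub_apply, smul_eq_mul] at e ⊢
    have : ((u t : ℚ)) = ((k * ((Pi.single i 1 : Fin n → ℤ) t - (Pi.single j 1 : Fin n → ℤ) t) : ℤ) : ℚ) := by
      push_cast
      rw [e]
      congr 1 <;> simp [Pi.single_apply]
    exact_mod_cast this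
  rw [← this]; exact hu

end

section
variable {n : ℕ}

lemma Lperp_add {L : Set (Fin n → ℤ)} {a b : Fin n → ℚ} (ha : a ∈ Lperp L) (hb : b ∈ Lperp L) :
    (a + b) ∈ Lperp L := by
  intro v hv
  have := ha v hv; have := hb v hv
  simp only [Pi.add_apply, mul_add, Finset.sum_add_distrib, *, add_zero]

lemma Lperp_smul {L : Set (Fin n → ℤ)} {a : Fin n → ℚ} (c : ℚ) (ha : a ∈ Lperp L) :
    (c • a) ∈ Lperp L := by
  intro v hv
  have h := ha v hv
  simp only [Pi.smul_apply, smul_eq_mul]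
  calc ∑ i, (v i : ℚ) * (c * a i) = c * ∑ i, (v i : ℚ) * a i := by
        rw [Finset.mul_sum]; exact Finset.sum_congr rfl fun i _ => by ring
    _ = 0 := by rw [h, mul_zero]

lemma Lperp_zero {L : Set (Fin n → ℤ)} : (0 : Fin n → ℚ) ∈ Lperp L := by
  intro v hv; simp

lemma avoid (L : Set (Fin n → ℤ)) (i₀ : Fin n) (S : Finset (Fin n))
    (hS : ∀ x ∈ S, ∃ lam ∈ Lperp L, lam x ≠ lam i₀) :
    ∃ lam ∈ Lperp L, ∀ x ∈ S, lam x ≠ lam i₀ := by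
  classical
  induction S using Finset.induction_on with
  | empty => exact ⟨0, Lperp_zero, by simp⟩
  | @insert a S ha ih =>
    obtain ⟨lam, hlamp, hlam⟩ := ih (fun x hx => hS x (Finset.mem_insert_of_mem hx))
    obtain ⟨mu, hmup, hmu⟩ := hS a (Finset.mem_insert_self a S)
    set bad : Fin n → ℚ := fun x =>
      if mu x - mu i₀ ≠ 0 then (lam i₀ - lam x) / (mu x - mu i₀) else 37 with hbad
    obtain ⟨t, ht⟩ := Infinite.exists_notMem_finset ((insert a S).image bad)
    refine ⟨lam + t • mu, Lperp_add hlamp (Lperp_smul t hmup), ?_⟩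
    intro x hx
    simp only [Pi.add_apply, Pi.smul_apply, smul_eq_mul]
    intro heq
    by_cases hc : mu x - mu i₀ = 0
    · have hmueq : mu x = mu i₀ := by linarith [sub_eq_zero.mp hc]
      rw [hmueq] at heq
      have hlameq : lam x = lam i₀ := by linarith
      rcases Finset.mem_insert.mp hx with rfl | hxS
      · exact hmu (sub_eq_zero.mp hc)
      · exact hlam x hxS hlameq
    · apply ht
      refine Finset.mem_image.mpr ⟨x, hx, ?_⟩
      show (if mu x - mu i₀ ≠ 0 then (lam i₀ - lam x) / (mu x - mu i₀) else 37) = t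
      rw [if_pos hc]
      field_simp
      linarith


section
variable {n : ℕ}

def sim (L : AddSubgroup (Fin n → ℤ)) (i j : Fin n) : Prop :=
  ∀ lam ∈ Lperp (L : Set (Fin n → ℤ)), lam i = lam j

lemma sim_refl (L : AddSubgroup (Fin n → ℤ)) (i : Fin n) : sim L i i := fun _ _ => rfl
lemma sim_symm {L : AddSubgroup (Fin n → ℤ)} {i j : Fin n} (h : sim L i j) : sim L j i :=
  fun lam hl => (h lam hl).symm
lemma sim_trans {L : AddSubgroup (Fin n → ℤ)} {i j k : Fin n} (h1 : sim L i j)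
    (h2 : sim L j k) : sim L i k := fun lam hl => (h1 lam hl).trans (h2 lam hl)

lemma core (G : Subgroup (Equiv.Perm (Fin n))) (i₀ : Fin n)
    (htrans : SetTransitive (G : Set (Equiv.Perm (Fin n))))
    (hq : QTrivialPair (stabSubgroup G i₀))
    (L : AddSubgroup (Fin n → ℤ))
    (hstab : ∀ g : ↥G, ∀ v ∈ L, (fun i => v (((g : Equiv.Perm (Fin n)))⁻¹ i)) ∈ L) :
    (∀ u ∈ L, ∀ i j : Fin n, u i = u j)
    ∨ (∀ i j : Fin n, ∃ k : ℤ, 0 < k ∧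
        k • ((Pi.single i 1 : Fin n → ℤ) - Pi.single j 1) ∈ L) := by
  classical
  -- closure of Lperp under the permutations in G
  have hperm : ∀ g : ↥G, ∀ lam ∈ Lperp (L : Set (Fin n → ℤ)),
      (fun i => lam ((g : Equiv.Perm (Fin n)) i)) ∈ Lperp (L : Set (Fin n → ℤ)) := by
    intro g lam hl v hv
    have hv' := hstab g v hv
    have := hl _ hv'
    calc ∑ i, (v i : ℚ) * lam ((g : Equiv.Perm (Fin n)) i)
        = ∑ j, (fun j => (v (((g : Equiv.Perm (Fin n)))⁻¹ j) : ℚ) * lam j) j := by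
          rw [← Equiv.sum_comp ((g : Equiv.Perm (Fin n)))
            (fun j => ((v (((g : Equiv.Perm (Fin n)))⁻¹ j) : ℚ) * lam j))]
          refine Finset.sum_congr rfl fun i _ => ?_
          simp
      _ = 0 := this
  have hsiminv : ∀ g : ↥G, ∀ i j : Fin n, sim L i j →
      sim L ((g : Equiv.Perm (Fin n)) i) ((g : Equiv.Perm (Fin n)) j) := by
    intro g i j hij lam hl
    exact hij _ (hperm g lam hl)
  by_cases hcase : ∀ x, sim L x i₀ → x = i₀
  · -- Case A
    left
    obtain ⟨lam₀, h₀, hsep'⟩ := avoid (L : Set (Fin n → ℤ)) i₀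
      (Finset.univ.filter (· ≠ i₀)) (by
        intro x hx
        have hxne : x ≠ i₀ := (Finset.mem_filter.mp hx).2
        have : ¬ sim L x i₀ := fun hsim => hxne (hcase x hsim)
        rw [sim] at this
        push_neg at this
        exact this)
    have hsep : ∀ x, lam₀ x = lam₀ i₀ → x = i₀ := by
      intro x hx
      by_contra hne
      exact hsep' x (Finset.mem_filter.mpr ⟨Finset.mem_univ x, hne⟩) hx
    rcases keyLemma G i₀ htrans hq (Lperp (L : Set (Fin n → ℤ))) hperm lam₀ h₀ hsep
      with h | h
    · intro u hu i j
      have : intCast u = 0 := h (intCast u) (fun lam hl => hl u hu)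
      have hi := congrFun this i
      have hj := congrFun this j
      simp only [intCast, Pi.zero_apply, Int.cast_eq_zero] at hi hj
      rw [hi, hj]
    · intro u hu i j
      have := h (intCast u) (fun lam hl => hl u hu) i j
      simp only [intCast] at this
      exact_mod_cast this
  · -- Case B
    right
    push_neg at hcase
    obtain ⟨x₀, hx₀sim, hx₀ne⟩ := hcase
    set ΛB : Set (Fin n → ℚ) :=
      {lam | (∃ i₁, ∀ x, ¬ sim L x i₁ → lam x = 0) ∧ ∑ x, lam x = 0} with hΛB
    have hcloseB : ∀ g : ↥G, ∀ lam ∈ ΛB,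
        (fun i => lam ((g : Equiv.Perm (Fin n)) i)) ∈ ΛB := by
      intro g lam hl
      obtain ⟨⟨i₁, hsupp⟩, hsum⟩ := hl
      constructor
      · refine ⟨((g : Equiv.Perm (Fin n)))⁻¹ i₁, fun x hx => ?_⟩
        refine hsupp _ (fun hsimgx => hx ?_)
        have := hsiminv g⁻¹ _ _ hsimgx
        simpa using this
      · simpa using (Equiv.sum_comp (g : Equiv.Perm (Fin n)) lam).trans hsum
    set d : ℕ := (Finset.univ.filter (fun x => sim L x i₀)).card with hd
    have hi₀mem : i₀ ∈ Finset.univ.filter (fun x => sim L x i₀) :=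
      Finset.mem_filter.mpr ⟨Finset.mem_univ _, sim_refl L i₀⟩
    have hdge2 : 2 ≤ d := by
      rw [hd]
      refine Finset.one_lt_card.mpr ⟨i₀, hi₀mem, x₀,
        Finset.mem_filter.mpr ⟨Finset.mem_univ _, hx₀sim⟩, (Ne.symm hx₀ne)⟩
    set lam₀ : Fin n → ℚ := fun x => if x = i₀ then (d : ℚ) - 1
      else if sim L x i₀ then -1 else 0 with hlam₀
    have hlam₀i₀ : lam₀ i₀ = (d : ℚ) - 1 := by rw [hlam₀]; simp
    have hsep : ∀ x, lam₀ x = lam₀ i₀ → x = i₀ := by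
      intro x hx
      by_contra hne
      rw [hlam₀i₀, hlam₀] at hx
      simp only [hne, if_false] at hx
      have : (2 : ℚ) ≤ (d : ℚ) := by exact_mod_cast hdge2
      have h2d : (2 : ℚ) ≤ (d : ℚ) := this
      by_cases hsx : sim L x i₀
      · rw [if_pos hsx] at hx; linarith
      · rw [if_neg hsx] at hx; linarith
    have h₀ : lam₀ ∈ ΛB := by
      constructor
      · refine ⟨i₀, fun x hx => ?_⟩
        have hne : x ≠ i₀ := fun he => hx (he ▸ sim_refl L i₀)
        rw [hlam₀]; simp [hne, hx]
      · -- sum of lam₀ is zero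
        rw [← Finset.add_sum_erase _ _ (Finset.mem_univ i₀), hlam₀i₀]
        have : ∀ x ∈ Finset.univ.erase i₀, lam₀ x = if sim L x i₀ then -1 else 0 := by
          intro x hx
          rw [hlam₀]
          simp [Finset.mem_erase.mp hx |>.1]
        rw [Finset.sum_congr rfl this, Finset.sum_ite, Finset.sum_const, Finset.sum_const_zero]
        have hcard : ((Finset.univ.erase i₀).filter (fun x => sim L x i₀)).card = d - 1 := by
          rw [Finset.filter_erase, Finset.card_erase_of_mem hi₀mem]
        rw [hcard, add_zero, nsmul_eq_mul]
        have : ((d - 1 : ℕ) : ℚ) = (d : ℚ) - 1 := by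
          have : 1 ≤ d := le_trans one_le_two hdge2
          push_cast [Nat.cast_sub this]
          ring
        rw [this]; ring
    rcases keyLemma G i₀ htrans hq ΛB hcloseB lam₀ h₀ hsep with h | h
    · -- impossible: the indicator of the class of i₀ is orthogonal and nonzero
      exfalso
      set m : Fin n → ℚ := fun i => if sim L i i₀ then 1 else 0 with hm
      have horth : ∀ lam ∈ ΛB, ∑ i, m i * lam i = 0 := by
        intro lam hl
        obtain ⟨⟨i₁, hsupp⟩, hsum⟩ := hl
        by_cases hsim1 : sim L i₁ i₀
        · have : ∀ i, m i * lam i = lam i := by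
            intro i
            by_cases hsi : sim L i i₀
            · rw [hm]; simp [hsi]
            · have : lam i = 0 := hsupp i (fun hii₁ => hsi (sim_trans hii₁ hsim1))
              rw [this, mul_zero]
          rw [Finset.sum_congr rfl fun i _ => this i, hsum]
        · have : ∀ i, m i * lam i = 0 := by
            intro i
            by_cases hsi : sim L i i₀
            · have : lam i = 0 :=
                hsupp i (fun hii₁ => hsim1 (sim_trans (sim_symm hii₁) hsi))
              rw [this, mul_zero]
            · rw [hm]; simp [hsi]
          rw [Finset.sum_congr rfl fun i _ => this i]
          simp
      have := congrFun (h m horth) i₀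
      rw [hm] at this
      simp [sim_refl L i₀] at this
    · -- the class of i₀ is everything
      set m : Fin n → ℚ := fun i => if sim L i i₀ then 1 else 0 with hm
      have horth : ∀ lam ∈ ΛB, ∑ i, m i * lam i = 0 := by
        intro lam hl
        obtain ⟨⟨i₁, hsupp⟩, hsum⟩ := hl
        by_cases hsim1 : sim L i₁ i₀
        · have : ∀ i, m i * lam i = lam i := by
            intro i
            by_cases hsi : sim L i i₀
            · rw [hm]; simp [hsi]
            · have : lam i = 0 := hsupp i (fun hii₁ => hsi (sim_trans hii₁ hsim1))
              rw [this, mul_zero]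
          rw [Finset.sum_congr rfl fun i _ => this i, hsum]
        · have : ∀ i, m i * lam i = 0 := by
            intro i
            by_cases hsi : sim L i i₀
            · have : lam i = 0 :=
                hsupp i (fun hii₁ => hsim1 (sim_trans (sim_symm hii₁) hsi))
              rw [this, mul_zero]
            · rw [hm]; simp [hsi]
          rw [Finset.sum_congr rfl fun i _ => this i]
          simp
      have hall : ∀ i, sim L i i₀ := by
        intro i
        have := h m horth i i₀
        rw [hm] at this
        simp only [sim_refl L i₀, if_true] at this
        by_contra hns
        simp [hns] at this
      intro i j
      exact dual_clearing L i j (sim_trans (hall i) (sim_symm (hall j)))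
  done

end

def latticeOne {n : ℕ} (r : Fin n → ℂ) (hr0 : ∀ i, r i ≠ 0) : AddSubgroup (Fin n → ℤ) where
  carrier := {v | (∏ i, r i ^ v i) = 1}
  add_mem' := by
    intro a b ha hb
    show (∏ i, r i ^ (a i + b i)) = 1
    rw [prod_zpow_add hr0, ha, hb, mul_one]
  zero_mem' := by
    show (∏ i, r i ^ (0 : ℤ)) = 1
    simp
  neg_mem' := by
    intro a ha
    show (∏ i, r i ^ (-(a i))) = 1
    rw [prod_zpow_neg, ha, inv_one]

def latticeQ {n : ℕ} (r : Fin n → ℂ) (hr0 : ∀ i, r i ≠ 0) : AddSubgroup (Fin n → ℤ) where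
  carrier := {v | IsRat (∏ i, r i ^ v i)}
  add_mem' := by
    intro a b ha hb
    show IsRat (∏ i, r i ^ (a i + b i))
    rw [prod_zpow_add hr0]
    exact IsRat.mul ha hb
  zero_mem' := by
    show IsRat (∏ i, r i ^ (0 : ℤ))
    simpa using IsRat.one
  neg_mem' := by
    intro a ha
    show IsRat (∏ i, r i ^ (-(a i)))
    rw [prod_zpow_neg]
    exact IsRat.inv ha

/-- Let `f ∈ ℚ[x]` with `f(0) ≠ 0` have no multiple roots, and suppose
some root of `f` is not a root of rational. Let `(G, R)` be one of the pairs
`(G_f, R_f)`, `(G_f^B, R_f^ℚ)`, `(G_f^ℚ, R_f^ℚ)`. If `G` is transitive on the roots and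
the pair `(G, H)` is ℚ-trivial, where `H` is the stabilizer in `G` of a root of `f`,
then the lattice `R` is trivial. -/
theorem statement16 (f : Polynomial ℚ) (hf0 : f.eval 0 ≠ 0) (n : ℕ) (hn : n = f.natDegree)
    (r : Fin n → ℂ) (hinj : Function.Injective r)
    (hroot : ∀ i, Polynomial.aeval (r i) f = 0)
    (hall : ∀ z : ℂ, Polynomial.aeval z f = 0 → ∃ i, r i = z)
    (hsome : ∃ i, ¬ IsRootOfRational (r i))
    (G : Subgroup (Equiv.Perm (Fin n)))
    (htrans : SetTransitive (G : Set (Equiv.Perm (Fin n))))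
    (i₀ : Fin n) (hq : QTrivialPair (stabSubgroup G i₀)) :
    ((G : Set (Equiv.Perm (Fin n))) = GaloisLike r → VecLatticeTrivial r) ∧
    ((G : Set (Equiv.Perm (Fin n))) = GaloisLikeB r → VecLatticeQTrivial r) ∧
    ((G : Set (Equiv.Perm (Fin n))) = GaloisLikeQ r → VecLatticeQTrivial r) := by
  classical
  obtain ⟨istar, histar⟩ := hsome
  have hr0 : ∀ i, r i ≠ 0 := by
    intro i hzero
    apply hf0
    have h := hroot i
    rw [hzero, Polynomial.aeval_def, Polynomial.eval₂_at_zero,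
      Polynomial.coeff_zero_eq_eval_zero] at h
    exact (map_eq_zero_iff _ (algebraMap ℚ ℂ).injective).mp h
  have hprod : IsRat (∏ i, r i) := roots_prod_isRat hf0 hn r hinj hroot
  refine ⟨?_, ?_, ?_⟩
  · -- G = GaloisLike
    intro hG
    have hstab : ∀ g : ↥G, ∀ v ∈ latticeOne r hr0,
        (fun i => v (((g : Equiv.Perm (Fin n)))⁻¹ i)) ∈ latticeOne r hr0 := by
      intro g v hv
      have hp : (↑g : Equiv.Perm (Fin n)) ∈ GaloisLike r := by rw [← hG]; exact g.2
      show (∏ i, r i ^ v (((g : Equiv.Perm (Fin n)))⁻¹ i)) = 1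
      calc ∏ i, r i ^ v (((g : Equiv.Perm (Fin n)))⁻¹ i)
          = ∏ i, (fun x => r x ^ v (((g : Equiv.Perm (Fin n)))⁻¹ x))
              ((g : Equiv.Perm (Fin n)) i) :=
            (Equiv.prod_comp (g : Equiv.Perm (Fin n)) _).symm
        _ = ∏ i, r ((g : Equiv.Perm (Fin n)) i) ^ v i :=
            Finset.prod_congr rfl fun i _ => by simp
        _ = 1 := hp v hv
    rcases core G i₀ htrans hq (latticeOne r hr0) hstab with hleft | hright
    · intro u hu i j
      exact hleft u hu i j
    · exfalso
      apply histar
      refine final_contradiction r hr0 hprod istar (fun j => ?_)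
      obtain ⟨k, hk, hmem⟩ := hright istar j
      refine ⟨k, hk, ?_⟩
      have : (∏ t, r t ^ ((k • ((Pi.single istar 1 : Fin n → ℤ) - Pi.single j 1)
          : Fin n → ℤ)) t) = 1 := hmem
      rw [this]
      exact IsRat.one
  · -- G = GaloisLikeB
    intro hG
    have hstab : ∀ g : ↥G, ∀ v ∈ latticeQ r hr0,
        (fun i => v (((g : Equiv.Perm (Fin n)))⁻¹ i)) ∈ latticeQ r hr0 := by
      intro g v hv
      have hp : (↑g : Equiv.Perm (Fin n)) ∈ GaloisLikeB r := by rw [← hG]; exact g.2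
      show IsRat (∏ i, r i ^ v (((g : Equiv.Perm (Fin n)))⁻¹ i))
      have heq : ∏ i, r i ^ v (((g : Equiv.Perm (Fin n)))⁻¹ i)
          = ∏ i, r ((g : Equiv.Perm (Fin n)) i) ^ v i :=
        calc ∏ i, r i ^ v (((g : Equiv.Perm (Fin n)))⁻¹ i)
            = ∏ i, (fun x => r x ^ v (((g : Equiv.Perm (Fin n)))⁻¹ x))
                ((g : Equiv.Perm (Fin n)) i) :=
              (Equiv.prod_comp (g : Equiv.Perm (Fin n)) _).symm
          _ = ∏ i, r ((g : Equiv.Perm (Fin n)) i) ^ v i :=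
              Finset.prod_congr rfl fun i _ => by simp
      rw [heq, hp v hv]
      exact hv
    rcases core G i₀ htrans hq (latticeQ r hr0) hstab with hleft | hright
    · intro u hu i j
      exact hleft u hu i j
    · exfalso
      apply histar
      refine final_contradiction r hr0 hprod istar (fun j => ?_)
      obtain ⟨k, hk, hmem⟩ := hright istar j
      exact ⟨k, hk, hmem⟩
  · -- G = GaloisLikeQ
    intro hG
    have hstab : ∀ g : ↥G, ∀ v ∈ latticeQ r hr0,
        (fun i => v (((g : Equiv.Perm (Fin n)))⁻¹ i)) ∈ latticeQ r hr0 := by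
      intro g v hv
      have hp : (↑g : Equiv.Perm (Fin n)) ∈ GaloisLikeQ r := by rw [← hG]; exact g.2
      show IsRat (∏ i, r i ^ v (((g : Equiv.Perm (Fin n)))⁻¹ i))
      have heq : ∏ i, r i ^ v (((g : Equiv.Perm (Fin n)))⁻¹ i)
          = ∏ i, r ((g : Equiv.Perm (Fin n)) i) ^ v i :=
        calc ∏ i, r i ^ v (((g : Equiv.Perm (Fin n)))⁻¹ i)
            = ∏ i, (fun x => r x ^ v (((g : Equiv.Perm (Fin n)))⁻¹ x))
                ((g : Equiv.Perm (Fin n)) i) :=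
              (Equiv.prod_comp (g : Equiv.Perm (Fin n)) _).symm
          _ = ∏ i, r ((g : Equiv.Perm (Fin n)) i) ^ v i :=
              Finset.prod_congr rfl fun i _ => by simp
      rw [heq]
      exact hp v hv
    rcases core G i₀ htrans hq (latticeQ r hr0) hstab with hleft | hright
    · intro u hu i j
      exact hleft u hu i j
    · exfalso
      apply histar
      refine final_contradiction r hr0 hprod istar (fun j => ?_)
      obtain ⟨k, hk, hmem⟩ := hright istar j
      exact ⟨k, hk, hmem⟩

end
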